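/- Let Ω be a nonempty set, L the set of bounded functions X : Ω → ℝ (ordered pointwise), and p̄ > 0. Let μ : L → ℝ be a satisficing measure, i.e.: 0 ≤ μ(X) ≤ p̄ for all X; if X(ω) ≥ 0 for all ω then μ(X) = p̄; if X(ω) < 0 for all ω then μ(X) = 0; if X ≤ Y pointwise then μ(X) ≤ μ(Y); and lim_{a→0⁺} μ(X + a·1) = μ(X). For k ∈ (0, p̄] define ρ_k(X) = inf{a ∈ ℝ : μ(X + a·1) ≥ k}. Then: (i) for every k ∈ (0, p̄] and every X ∈ L, the set {a ∈ ℝ : μ(X + a·1) ≥ k} is nonempty and bounded below, so ρ_k(X) is a well-defined real number; (ii) (translation invariance) ρ_k(X + r·1) = ρ_k(X) − r for every r ∈ ℝ; (iii) (monotonicity) X ≤ Y pointwise implies ρ_k(Y) ≤ ρ_k(X); (iv) k ≤ k' implies ρ_k(X) ≤ ρ_{k'}(X); (v) (recovery) μ(X) = sup({0} ∪ {k ∈ (0, p̄] : ρ_k(X) ≤ 0}). -/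

import Mathlib

open Set Filter

/-- A real-valued function on `Ω` is bounded. -/
def IsBdd {Ω : Type*} (X : Ω → ℝ) : Prop := ∃ M : ℝ, ∀ ω, |X ω| ≤ M

lemma isBdd_add_const {Ω : Type*} {X : Ω → ℝ} (h : IsBdd X) (a : ℝ) :
    IsBdd (fun ω => X ω + a) := by
  obtain ⟨M, hM⟩ := h
  exact ⟨M + |a|, fun ω => (abs_add_le _ _).trans (by have := hM ω; linarith)⟩

/-- Brown–Sim duality, converse direction: every satisficing measure `μ` arises from the
nondecreasing family of monotone, translation-invariant risk measures
`ρ_k(X) = inf {a : μ(X + a) ≥ k}` via `μ(X) = sup ({0} ∪ {k ∈ (0, p̄] : ρ_k(X) ≤ 0})`. -/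
theorem stmt_1 {Ω : Type*} [Nonempty Ω] (p : ℝ) (hp : 0 < p)
    (μ : (Ω → ℝ) → ℝ)
    (hrange : ∀ X : Ω → ℝ, IsBdd X → 0 ≤ μ X ∧ μ X ≤ p)
    (hattain : ∀ X : Ω → ℝ, IsBdd X → (∀ ω, 0 ≤ X ω) → μ X = p)
    (hapathy : ∀ X : Ω → ℝ, IsBdd X → (∀ ω, X ω < 0) → μ X = 0)
    (hmono : ∀ X Y : Ω → ℝ, IsBdd X → IsBdd Y → (∀ ω, X ω ≤ Y ω) → μ X ≤ μ Y)
    (hgain : ∀ X : Ω → ℝ, IsBdd X →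
      Tendsto (fun a : ℝ => μ (fun ω => X ω + a)) (nhdsWithin 0 (Ioi 0)) (nhds (μ X)))
    (ρ : ℝ → (Ω → ℝ) → ℝ)
    (hρ : ∀ (k : ℝ) (X : Ω → ℝ), ρ k X = sInf {a : ℝ | k ≤ μ (fun ω => X ω + a)}) :
    -- (i) the defining set is nonempty and bounded below, so ρ_k(X) is well defined
    (∀ k ∈ Ioc (0 : ℝ) p, ∀ X : Ω → ℝ, IsBdd X →
      {a : ℝ | k ≤ μ (fun ω => X ω + a)}.Nonempty ∧
      BddBelow {a : ℝ | k ≤ μ (fun ω => X ω + a)}) ∧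
    -- (ii) translation invariance
    (∀ k ∈ Ioc (0 : ℝ) p, ∀ X : Ω → ℝ, IsBdd X → ∀ r : ℝ,
      ρ k (fun ω => X ω + r) = ρ k X - r) ∧
    -- (iii) monotonicity
    (∀ k ∈ Ioc (0 : ℝ) p, ∀ X Y : Ω → ℝ, IsBdd X → IsBdd Y →
      (∀ ω, X ω ≤ Y ω) → ρ k Y ≤ ρ k X) ∧
    -- (iv) the family is nondecreasing in k
    (∀ k ∈ Ioc (0 : ℝ) p, ∀ k' ∈ Ioc (0 : ℝ) p, k ≤ k' →
      ∀ X : Ω → ℝ, IsBdd X → ρ k X ≤ ρ k' X) ∧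
    -- (v) recovery of μ
    (∀ X : Ω → ℝ, IsBdd X →
      μ X = sSup ({0} ∪ {k : ℝ | k ∈ Ioc (0 : ℝ) p ∧ ρ k X ≤ 0})) := by
  -- nonemptiness of the defining set
  have hSne : ∀ k ∈ Ioc (0 : ℝ) p, ∀ X : Ω → ℝ, IsBdd X →
      {a : ℝ | k ≤ μ (fun ω => X ω + a)}.Nonempty := by
    intro k hk X hX
    obtain ⟨M, hM⟩ := hX
    refine ⟨M, ?_⟩
    have hpos : ∀ ω, 0 ≤ X ω + M := fun ω => by
      have := (abs_le.mp (hM ω)).1; linarith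
    have := hattain (fun ω => X ω + M) (isBdd_add_const ⟨M, hM⟩ M) hpos
    simp only [mem_setOf_eq, this]
    exact hk.2
  -- bounded below
  have hSbd : ∀ k ∈ Ioc (0 : ℝ) p, ∀ X : Ω → ℝ, IsBdd X →
      BddBelow {a : ℝ | k ≤ μ (fun ω => X ω + a)} := by
    intro k hk X hX
    obtain ⟨M, hM⟩ := hX
    refine ⟨-M, fun a ha => ?_⟩
    by_contra hlt
    push_neg at hlt
    have hneg : ∀ ω, X ω + a < 0 := fun ω => by
      have := (abs_le.mp (hM ω)).2; linarith
    have := hapathy (fun ω => X ω + a) (isBdd_add_const ⟨M, hM⟩ a) hneg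
    have hka : k ≤ μ (fun ω => X ω + a) := ha
    rw [this] at hka
    exact absurd hka (not_le.mpr hk.1)
  -- monotonicity of the defining set membership in `a`
  have hSmem : ∀ (k : ℝ) (X : Ω → ℝ), IsBdd X → ∀ a b : ℝ, a ≤ b →
      k ≤ μ (fun ω => X ω + a) → k ≤ μ (fun ω => X ω + b) := by
    intro k X hX a b hab hka
    exact hka.trans (hmono _ _ (isBdd_add_const hX a) (isBdd_add_const hX b)
      (fun ω => by linarith))
  refine ⟨fun k hk X hX => ⟨hSne k hk X hX, hSbd k hk X hX⟩, ?_, ?_, ?_, ?_⟩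
  · -- (ii) translation invariance
    intro k hk X hX r
    rw [hρ, hρ]
    set S := {a : ℝ | k ≤ μ (fun ω => X ω + a)} with hS
    have hne := hSne k hk X hX
    have hbd := hSbd k hk X hX
    have hset : {a : ℝ | k ≤ μ (fun ω => (X ω + r) + a)} = {a : ℝ | a + r ∈ S} := by
      ext a
      simp only [mem_setOf_eq, hS]
      constructor <;> intro h <;>
        · convert h using 2; ext ω; ring
    rw [hset]
    have hne' : {a : ℝ | a + r ∈ S}.Nonempty := by
      obtain ⟨x, hx⟩ := hne
      exact ⟨x - r, by simp only [mem_setOf_eq, sub_add_cancel]; exact hx⟩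
    apply le_antisymm
    · apply le_sub_iff_add_le.mpr
      apply le_csInf hne
      intro x hx
      have : sInf {a : ℝ | a + r ∈ S} ≤ x - r :=
        csInf_le ⟨(hbd.choose) - r, fun a ha => by
          have := hbd.choose_spec ha; linarith⟩ (by simp only [mem_setOf_eq, sub_add_cancel]; exact hx)
      linarith
    · apply le_csInf hne'
      intro a ha
      have : sInf S ≤ a + r := csInf_le hbd ha
      linarith
  · -- (iii) monotonicity
    intro k hk X Y hX hY hXY
    rw [hρ, hρ]
    apply csInf_le_csInf (hSbd k hk Y hY) (hSne k hk X hX)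
    intro a ha
    exact ha.trans (hmono _ _ (isBdd_add_const hX a) (isBdd_add_const hY a)
      (fun ω => by have := hXY ω; linarith))
  · -- (iv) nondecreasing in k
    intro k hk k' hk' hkk' X hX
    rw [hρ, hρ]
    apply csInf_le_csInf (hSbd k hk X hX) (hSne k' hk' X hX)
    intro a ha
    exact hkk'.trans ha
  · -- (v) recovery
    intro X hX
    set T : Set ℝ := {0} ∪ {k : ℝ | k ∈ Ioc (0 : ℝ) p ∧ ρ k X ≤ 0} with hT
    have hTne : T.Nonempty := ⟨0, Or.inl rfl⟩
    have hTbd : BddAbove T := by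
      refine ⟨p, fun k hk => ?_⟩
      rcases hk with hk | hk
      · simp only [mem_singleton_iff] at hk; linarith
      · exact hk.1.2
    apply le_antisymm
    · -- μ X ≤ sSup T
      rcases eq_or_lt_of_le (hrange X hX).1 with h0 | h0
      · rw [← h0]
        exact le_csSup hTbd (Or.inl rfl)
      · -- μ X ∈ T : take k = μ X
        apply le_csSup hTbd
        refine Or.inr ⟨⟨h0, (hrange X hX).2⟩, ?_⟩
        rw [hρ]
        have hmem : ∀ ε : ℝ, 0 < ε → μ X ≤ μ (fun ω => X ω + ε) := by
          intro ε hε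
          have : μ X = μ (fun ω => X ω + 0) := by
            congr 1; ext ω; ring
          rw [this]
          exact hSmem (μ (fun ω => X ω + 0)) X hX 0 ε hε.le le_rfl
        have : ∀ ε : ℝ, 0 < ε → sInf {a : ℝ | μ X ≤ μ (fun ω => X ω + a)} ≤ ε := by
          intro ε hε
          exact csInf_le (hSbd (μ X) ⟨h0, (hrange X hX).2⟩ X hX) (hmem ε hε)
        apply le_of_forall_pos_le_add
        intro ε hε
        simpa using this ε hε
    · -- sSup T ≤ μ X
      apply csSup_le hTne
      intro k hk
      rcases hk with hk | hk
      · simp only [mem_singleton_iff] at hk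
        rw [hk]; exact (hrange X hX).1
      · obtain ⟨hkIoc, hρk⟩ := hk
        rw [hρ] at hρk
        -- k ≤ μ (X + ε) for every ε > 0
        have hkε : ∀ ε ∈ Ioi (0 : ℝ), k ≤ μ (fun ω => X ω + ε) := by
          intro ε hε
          have hlt : sInf {a : ℝ | k ≤ μ (fun ω => X ω + a)} < ε := lt_of_le_of_lt hρk hε
          obtain ⟨a, ha, haε⟩ := exists_lt_of_csInf_lt (hSne k hkIoc X hX) hlt
          exact hSmem k X hX a ε haε.le ha
        exact ge_of_tendsto (hgain X hX) (eventually_nhdsWithin_of_forall hkε)
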